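/- For every λ ≠ 0, the function f_{Z^λ}(t) := (|λ| / √(2π t (1−t)³)) · exp(−λ² t / (2(1−t))) on (0,1) is a probability density: ∫₀¹ (|λ| / √(2π t (1−t)³)) · exp(−λ² t / (2(1−t))) dt = 1. -/

import Mathlib

open MeasureTheory Real


private lemma fZ_sqrt_aux (lam u c x : ℝ) (hc : c ≠ 0) :
    2 * x * (u ^ 2 / c) * (lam ^ 2 / c) ^ 3 = 2 * x * (u * |lam| ^ 3 / c ^ 2) ^ 2 := by
  have h6 : |lam| ^ 6 = lam ^ 6 := by
    rw [← abs_pow, abs_of_nonneg (by positivity)]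
  field_simp
  linear_combination (-(x * u ^ 2)) * h6

/-- for every `λ ≠ 0`, `f_{Z^λ}` is a probability density on `(0,1)`. -/
theorem fZ_integrates_to_one (lam : ℝ) (hlam : lam ≠ 0) :
    ∫ t in Set.Ioo (0 : ℝ) 1,
        |lam| / Real.sqrt (2 * π * t * (1 - t) ^ 3) *
          Real.exp (-(lam ^ 2 * t) / (2 * (1 - t))) = 1 := by
  have ha : (0:ℝ) < lam ^ 2 := by positivity
  set φ : ℝ → ℝ := fun u => u ^ 2 / (u ^ 2 + lam ^ 2) with hφ
  set φ' : ℝ → ℝ := fun u => 2 * u * lam ^ 2 / (u ^ 2 + lam ^ 2) ^ 2 with hφ'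
  have hc : ∀ u : ℝ, (0:ℝ) < u ^ 2 + lam ^ 2 := fun u => by positivity
  have himg : φ '' Set.Ioi 0 = Set.Ioo (0:ℝ) 1 := by
    apply Set.Subset.antisymm
    · rintro t ⟨u, hu, rfl⟩
      have hu : (0:ℝ) < u := hu
      constructor
      · exact div_pos (by positivity) (hc u)
      · rw [div_lt_one (hc u)]; nlinarith
    · rintro t ⟨ht0, ht1⟩
      refine ⟨|lam| * Real.sqrt (t / (1 - t)), ?_, ?_⟩
      · have : (0:ℝ) < t / (1 - t) := div_pos ht0 (by linarith)
        have := Real.sqrt_pos.2 this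
        exact mul_pos (abs_pos.2 hlam) this
      · have h1t : (0:ℝ) < 1 - t := by linarith
        have hsq : (|lam| * Real.sqrt (t / (1 - t))) ^ 2 = lam ^ 2 * (t / (1 - t)) := by
          rw [mul_pow, sq_abs, Real.sq_sqrt (le_of_lt (div_pos ht0 h1t))]
        simp only [hφ, hsq]
        field_simp
        ring
  have hinj : Set.InjOn φ (Set.Ioi 0) := by
    intro u hu v hv h
    simp only [hφ] at h
    have hu : (0:ℝ) < u := hu
    have hv : (0:ℝ) < v := hv
    have h2 : u ^ 2 * (v ^ 2 + lam ^ 2) = v ^ 2 * (u ^ 2 + lam ^ 2) := by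
      field_simp at h; linarith
    have : u ^ 2 = v ^ 2 := by nlinarith
    nlinarith
  have hderiv : ∀ u ∈ Set.Ioi (0:ℝ), HasDerivWithinAt φ (φ' u) (Set.Ioi 0) u := by
    intro u hu
    have h1 : HasDerivAt (fun u : ℝ => u ^ 2) (2 * u) u := by
      simpa using (hasDerivAt_pow 2 u)
    have h2 : HasDerivAt (fun u : ℝ => u ^ 2 + lam ^ 2) (2 * u) u := by
      simpa using h1.add_const (lam ^ 2)
    have := h1.div h2 (ne_of_gt (hc u))
    refine (HasDerivAt.hasDerivWithinAt ?_)
    refine this.congr_deriv ?_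
    simp only [hφ']
    field_simp
    ring
  have key : ∫ t in Set.Ioo (0:ℝ) 1,
      |lam| / Real.sqrt (2 * π * t * (1 - t) ^ 3) *
        Real.exp (-(lam ^ 2 * t) / (2 * (1 - t)))
      = ∫ u in Set.Ioi (0:ℝ), |φ' u| •
          (|lam| / Real.sqrt (2 * π * (φ u) * (1 - φ u) ^ 3) *
            Real.exp (-(lam ^ 2 * (φ u)) / (2 * (1 - φ u)))) := by
    rw [← himg]
    exact integral_image_eq_integral_abs_deriv_smul measurableSet_Ioi hderiv hinj _
  rw [key]
  have hpt : ∀ u ∈ Set.Ioi (0:ℝ), |φ' u| •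
      (|lam| / Real.sqrt (2 * π * (φ u) * (1 - φ u) ^ 3) *
        Real.exp (-(lam ^ 2 * (φ u)) / (2 * (1 - φ u))))
      = 2 / Real.sqrt (2 * π) * Real.exp (-(1/2) * u ^ 2) := by
    intro u hu
    have hu : (0:ℝ) < u := hu
    have hcu := hc u
    set c := u ^ 2 + lam ^ 2 with hcdef
    have h1φ : 1 - φ u = lam ^ 2 / c := by
      simp only [hφ]; field_simp
      rw [hcdef]; ring
    have hφu : φ u = u ^ 2 / c := rfl
    have hsqrt : Real.sqrt (2 * π * (φ u) * (1 - φ u) ^ 3)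
        = Real.sqrt (2 * π) * u * |lam| ^ 3 / c ^ 2 := by
      rw [hφu, h1φ]
      rw [show 2 * π * (u ^ 2 / c) * (lam ^ 2 / c) ^ 3
          = (2 * π) * ((u * |lam| ^ 3 / c ^ 2) ^ 2) by
        have := fZ_sqrt_aux lam u c π (ne_of_gt hcu)
        linarith [this]]
      rw [Real.sqrt_mul (by positivity), Real.sqrt_sq (by positivity)]
      ring
    have hexp : -(lam ^ 2 * (φ u)) / (2 * (1 - φ u)) = -(1/2) * u ^ 2 := by
      rw [hφu, h1φ]
      field_simp
    rw [hsqrt, hexp, smul_eq_mul]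
    have habs : |φ' u| = 2 * u * lam ^ 2 / c ^ 2 := by
      simp only [hφ']
      rw [abs_of_pos (by positivity)]
    rw [habs]
    have hlam3 : |lam| ^ 3 = |lam| * lam ^ 2 := by
      rw [pow_succ, sq_abs, mul_comm]
    rw [hlam3]
    have hs2π : Real.sqrt (2 * π) ≠ 0 := by positivity
    field_simp
  rw [setIntegral_congr_fun measurableSet_Ioi hpt]
  rw [MeasureTheory.integral_const_mul]
  have := integral_gaussian_Ioi (1/2)
  simp only [neg_mul] at this ⊢
  rw [this]
  rw [show π / (1/2 : ℝ) = 2 * π by ring]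
  have hs2π : Real.sqrt (2 * π) ≠ 0 := by positivity
  field_simp
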